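/- Base case of the normal-form recovery: with H_1 = Σ_j u_j(x_j²+ξ_j²) (u_j > 0 linearly independent over ℚ) and V_2 = Σ_{|k|=2} c_k x^{2k} the quartic part of the potential, the first normal-form term is H_2 = Σ_{|k|=2} c_k 4^{−2} Π_j C(2k_j,k_j) |z|^{2k} in complex coordinates z_j = x_j + iξ_j. Hence H_2 determines the coefficients c_k, i.e., the quartic Taylor coefficients of V. -/

import Mathlib

open MvPolynomial

def LinIndepQ {n : ℕ} (u : Fin n → ℝ) : Prop :=
  ∀ q : Fin n → ℚ, (∑ j, (q j : ℝ) * u j) = 0 → ∀ j, q j = 0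

noncomputable def LV {n : ℕ} (u : Fin n → ℝ)
    (P : MvPolynomial (Fin n ⊕ Fin n) ℂ) : MvPolynomial (Fin n ⊕ Fin n) ℂ :=
  C Complex.I * ∑ j, C (u j : ℂ) *
    (X (Sum.inl j) * pderiv (Sum.inl j) P - X (Sum.inr j) * pderiv (Sum.inr j) P)

def IsDiagExp {n : ℕ} (d : (Fin n ⊕ Fin n) →₀ ℕ) : Prop :=
  ∀ j, d (Sum.inl j) = d (Sum.inr j)

def IsOffDiagPoly {n : ℕ} (N : ℕ) (G : MvPolynomial (Fin n ⊕ Fin n) ℂ) : Prop :=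
  ∀ d ∈ G.support, (∑ v ∈ d.support, d v) = 2 * N ∧ ¬ IsDiagExp d

def IsDiagPoly {n : ℕ} (N : ℕ) (H : MvPolynomial (Fin n ⊕ Fin n) ℂ) : Prop :=
  ∀ d ∈ H.support, (∑ v ∈ d.support, d v) = 2 * N ∧ IsDiagExp d

noncomputable def diagExp {n : ℕ} (α : Fin n → ℕ) : (Fin n ⊕ Fin n) →₀ ℕ :=
  Finsupp.equivFunOnFinite.symm (Sum.elim α α)

/-- The substitution `x_j = (z_j + z̄_j)/2` turning a real polynomial in `x` into
a complex polynomial in `z, z̄`. -/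
noncomputable def xToZ {n : ℕ} :
    MvPolynomial (Fin n) ℝ →ₐ[ℝ] MvPolynomial (Fin n ⊕ Fin n) ℂ :=
  aeval (fun j => C ((1 : ℂ) / 2) * (X (Sum.inl j) + X (Sum.inr j)))

noncomputable def expOf {n : ℕ} (k : Fin n → ℕ) : Fin n →₀ ℕ :=
  Finsupp.equivFunOnFinite.symm k

lemma coeff_X_mul_pderiv {n : ℕ} (v : Fin n ⊕ Fin n) (P : MvPolynomial (Fin n ⊕ Fin n) ℂ)
    (d : (Fin n ⊕ Fin n) →₀ ℕ) :
    coeff d (X v * pderiv v P) = d v * coeff d P := by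
  induction P using MvPolynomial.induction_on' with
  | add p q hp hq => simp only [map_add, mul_add, coeff_add, hp, hq]
  | monomial m a =>
    rw [pderiv_monomial, X, monomial_mul, one_mul, coeff_monomial, coeff_monomial]
    have hkey : 0 < m v → Finsupp.single v 1 + (m - Finsupp.single v 1) = m := fun h1 => by
      rw [add_tsub_cancel_of_le]; rwa [Finsupp.single_le_iff]
    split_ifs with h h' h''
    · subst h'; ring
    · rcases Nat.eq_zero_or_pos (m v) with h0 | h1
      · simp [h0]
      · exact absurd (hkey h1 ▸ h) h'
    · subst h''
      rcases Nat.eq_zero_or_pos (m v) with h0 | h1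
      · simp [h0]
      · exact absurd (hkey h1) h
    · simp

lemma coeff_LV_diag {n : ℕ} (u : Fin n → ℝ) (G : MvPolynomial (Fin n ⊕ Fin n) ℂ)
    (d : (Fin n ⊕ Fin n) →₀ ℕ) (hd : IsDiagExp d) : coeff d (LV u G) = 0 := by
  rw [LV, coeff_C_mul, coeff_sum]
  have : ∀ j : Fin n, coeff d (C ((u j : ℂ)) *
      (X (Sum.inl j) * pderiv (Sum.inl j) G - X (Sum.inr j) * pderiv (Sum.inr j) G)) = 0 := by
    intro j
    rw [coeff_C_mul, coeff_sub, coeff_X_mul_pderiv, coeff_X_mul_pderiv, hd j]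
    ring
  rw [Finset.sum_congr rfl fun j _ => this j]
  simp

lemma coeff_binom_pow {n : ℕ} (a : Fin n) (m : ℕ) (u : (Fin n ⊕ Fin n) →₀ ℕ) :
    coeff u ((X (Sum.inl a) + X (Sum.inr a) : MvPolynomial (Fin n ⊕ Fin n) ℂ) ^ m)
      = if u = Finsupp.single (Sum.inl a) (u (Sum.inl a))
              + Finsupp.single (Sum.inr a) (u (Sum.inr a))
          ∧ u (Sum.inl a) + u (Sum.inr a) = m
        then (Nat.choose m (u (Sum.inl a)) : ℂ) else 0 := by
  have hne : (Sum.inl a : Fin n ⊕ Fin n) ≠ Sum.inr a := by simp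
  rw [add_pow]
  have hterm : ∀ i : ℕ,
      (X (Sum.inl a) : MvPolynomial (Fin n ⊕ Fin n) ℂ) ^ i * X (Sum.inr a) ^ (m - i)
          * ((Nat.choose m i : ℕ) : MvPolynomial (Fin n ⊕ Fin n) ℂ)
        = monomial (Finsupp.single (Sum.inl a) i + Finsupp.single (Sum.inr a) (m - i))
            ((Nat.choose m i : ℂ)) := by
    intro i
    rw [X_pow_eq_monomial, X_pow_eq_monomial, monomial_mul, one_mul, ← map_natCast
      (C : ℂ →+* MvPolynomial (Fin n ⊕ Fin n) ℂ), mul_comm, C_mul_monomial, mul_one]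
  simp only [hterm]
  rw [coeff_sum]
  simp only [coeff_monomial]
  by_cases hc : u = Finsupp.single (Sum.inl a) (u (Sum.inl a))
              + Finsupp.single (Sum.inr a) (u (Sum.inr a))
          ∧ u (Sum.inl a) + u (Sum.inr a) = m
  · rw [if_pos hc]
    obtain ⟨hu, hsum⟩ := hc
    have hmi : m - u (Sum.inl a) = u (Sum.inr a) := by omega
    rw [Finset.sum_eq_single_of_mem (u (Sum.inl a))]
    · rw [hmi, if_pos hu.symm]
    · exact Finset.mem_range.2 (by omega)
    · intro i _ hne2
      rw [if_neg]
      intro h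
      apply hne2
      have := congrArg (fun f => f (Sum.inl a)) h
      simpa [Finsupp.single_apply, hne] using this
  · rw [if_neg hc]
    apply Finset.sum_eq_zero
    intro i hi
    rw [if_neg]
    intro h
    apply hc
    have h1 : u (Sum.inl a) = i := by
      have := congrArg (fun f => f (Sum.inl a)) h
      simpa [Finsupp.single_apply, hne] using this.symm
    have h2 : u (Sum.inr a) = m - i := by
      have := congrArg (fun f => f (Sum.inr a)) h
      simpa [Finsupp.single_apply, hne] using this.symm
    have hi' : i ≤ m := by simp [Finset.mem_range] at hi; omega
    constructor
    · rw [h1, h2]; exact h.symm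
    · omega
lemma coeff_prod_binom_aux {n : ℕ} (d : Fin n → ℕ) (s : Finset (Fin n)) :
    ∀ e : (Fin n ⊕ Fin n) →₀ ℕ,
    coeff e (∏ j ∈ s, (X (Sum.inl j) + X (Sum.inr j) : MvPolynomial (Fin n ⊕ Fin n) ℂ) ^ d j)
      = if (∀ j ∈ s, e (Sum.inl j) + e (Sum.inr j) = d j)
          ∧ (∀ j, j ∉ s → e (Sum.inl j) = 0 ∧ e (Sum.inr j) = 0)
        then ∏ j ∈ s, (Nat.choose (d j) (e (Sum.inl j)) : ℂ) else 0 := by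
  induction s using Finset.induction_on with
  | empty =>
    intro e
    simp only [Finset.prod_empty, coeff_one]
    by_cases he : e = 0
    · subst he; simp
    · rw [if_neg (Ne.symm he), if_neg]
      rintro ⟨-, h2⟩
      apply he
      ext v
      rcases v with j | j
      · exact (h2 j (by simp)).1
      · exact (h2 j (by simp)).2
  | @insert a s ha ih =>
    intro e
    rw [Finset.prod_insert ha, coeff_mul]
    -- designated decomposition
    set u0 : (Fin n ⊕ Fin n) →₀ ℕ :=
      Finsupp.single (Sum.inl a) (e (Sum.inl a)) + Finsupp.single (Sum.inr a) (e (Sum.inr a))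
      with hu0
    have hne : ∀ j j' : Fin n, (Sum.inl j : Fin n ⊕ Fin n) ≠ Sum.inr j' := by simp
    have hu0l : ∀ j, u0 (Sum.inl j) = if j = a then e (Sum.inl a) else 0 := by
      intro j
      simp only [hu0, Finsupp.add_apply, Finsupp.single_apply, Sum.inl.injEq,
        if_neg (hne j a).symm, add_zero]
      exact if_congr eq_comm rfl rfl
    have hu0r : ∀ j, u0 (Sum.inr j) = if j = a then e (Sum.inr a) else 0 := by
      intro j
      simp only [hu0, Finsupp.add_apply, Finsupp.single_apply, Sum.inr.injEq,
        if_neg (hne a j), zero_add]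
      exact if_congr eq_comm rfl rfl
    -- characterize nonzero summands
    have main : ∀ u v : (Fin n ⊕ Fin n) →₀ ℕ, u + v = e →
        coeff u ((X (Sum.inl a) + X (Sum.inr a) : MvPolynomial (Fin n ⊕ Fin n) ℂ) ^ d a) *
          coeff v (∏ j ∈ s, (X (Sum.inl j) + X (Sum.inr j) :
            MvPolynomial (Fin n ⊕ Fin n) ℂ) ^ d j) ≠ 0 →
        u = u0 ∧ v = e - u0 ∧ e (Sum.inl a) + e (Sum.inr a) = d a ∧
          (∀ j ∈ s, e (Sum.inl j) + e (Sum.inr j) = d j) ∧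
          (∀ j, j ∉ insert a s → e (Sum.inl j) = 0 ∧ e (Sum.inr j) = 0) := by
      intro u v huv hnz
      rw [coeff_binom_pow, ih] at hnz
      by_cases h1 : u = Finsupp.single (Sum.inl a) (u (Sum.inl a))
              + Finsupp.single (Sum.inr a) (u (Sum.inr a))
          ∧ u (Sum.inl a) + u (Sum.inr a) = d a
      swap; · rw [if_neg h1, zero_mul] at hnz; exact absurd rfl hnz
      by_cases h2 : (∀ j ∈ s, v (Sum.inl j) + v (Sum.inr j) = d j)
          ∧ (∀ j, j ∉ s → v (Sum.inl j) = 0 ∧ v (Sum.inr j) = 0)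
      swap; · rw [if_neg h2, mul_zero] at hnz; exact absurd rfl hnz
      clear hnz
      obtain ⟨hu, hda⟩ := h1
      obtain ⟨hs, hout⟩ := h2
      have hva := hout a ha
      have hul : ∀ j, j ≠ a → u (Sum.inl j) = 0 := by
        intro j hj
        conv_lhs => rw [hu]
        simp [Finsupp.single_apply, Sum.inl.injEq, hne, hj]
      have hur : ∀ j, j ≠ a → u (Sum.inr j) = 0 := by
        intro j hj
        conv_lhs => rw [hu]
        simp [Finsupp.single_apply, Sum.inr.injEq, (hne j a).symm, hj]
      have heval : ∀ x, u x + v x = e x := by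
        intro x; rw [← huv]; simp
      have huea : u (Sum.inl a) = e (Sum.inl a) ∧ u (Sum.inr a) = e (Sum.inr a) := by
        have h1 := heval (Sum.inl a)
        have h2 := heval (Sum.inr a)
        have h3 := hva.1
        have h4 := hva.2
        omega
      have huu0 : u = u0 := by
        conv_lhs => rw [hu]
        rw [huea.1, huea.2]
      refine ⟨huu0, ?_, ?_, ?_, ?_⟩
      · ext x
        rw [Finsupp.tsub_apply, ← huu0, ← heval x]
        omega
      · rw [← huea.1, ← huea.2]; exact hda
      · intro j hj
        have h0l := hul j (fun h => ha (h ▸ hj))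
        have h0r := hur j (fun h => ha (h ▸ hj))
        have := heval (Sum.inl j); have := heval (Sum.inr j)
        have := hs j hj
        omega
      · intro j hj
        rw [Finset.mem_insert, not_or] at hj
        have h0l := hul j hj.1
        have h0r := hur j hj.1
        have hv0 := hout j hj.2
        have := heval (Sum.inl j); have := heval (Sum.inr j)
        omega
    by_cases hc : (∀ j ∈ insert a s, e (Sum.inl j) + e (Sum.inr j) = d j)
          ∧ (∀ j, j ∉ insert a s → e (Sum.inl j) = 0 ∧ e (Sum.inr j) = 0)
    · rw [if_pos hc]
      obtain ⟨hc1, hc2⟩ := hc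
      have hu0le : u0 ≤ e := by
        rw [Finsupp.le_def]
        intro x
        rcases x with j | j
        · rw [hu0l]; split_ifs with h
          · subst h; exact le_rfl
          · exact Nat.zero_le _
        · rw [hu0r]; split_ifs with h
          · subst h; exact le_rfl
          · exact Nat.zero_le _
      have hmem : (u0, e - u0) ∈ Finset.HasAntidiagonal.antidiagonal e := by
        rw [Finset.HasAntidiagonal.mem_antidiagonal]
        exact add_tsub_cancel_of_le hu0le
      rw [Finset.sum_eq_single_of_mem _ hmem]
      · -- evaluate designated term
        have hla : u0 (Sum.inl a) = e (Sum.inl a) := by rw [hu0l a, if_pos rfl]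
        have hra : u0 (Sum.inr a) = e (Sum.inr a) := by rw [hu0r a, if_pos rfl]
        have c1 : coeff u0 ((X (Sum.inl a) + X (Sum.inr a) :
            MvPolynomial (Fin n ⊕ Fin n) ℂ) ^ d a) = (Nat.choose (d a) (e (Sum.inl a)) : ℂ) := by
          rw [coeff_binom_pow, if_pos, hla]
          refine ⟨?_, ?_⟩
          · rw [hla, hra]
          · rw [hla, hra]
            exact hc1 a (Finset.mem_insert_self a s)
        have c2 : coeff (e - u0) (∏ j ∈ s, (X (Sum.inl j) + X (Sum.inr j) :
            MvPolynomial (Fin n ⊕ Fin n) ℂ) ^ d j)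
            = ∏ j ∈ s, (Nat.choose (d j) (e (Sum.inl j)) : ℂ) := by
          have hcond : (∀ j ∈ s, (e - u0) (Sum.inl j) + (e - u0) (Sum.inr j) = d j)
              ∧ (∀ j, j ∉ s → (e - u0) (Sum.inl j) = 0 ∧ (e - u0) (Sum.inr j) = 0) := by
            constructor
            · intro j hj
              have hja : j ≠ a := fun h => ha (h ▸ hj)
              rw [Finsupp.tsub_apply, Finsupp.tsub_apply, hu0l j, hu0r j,
                if_neg hja, if_neg hja, Nat.sub_zero, Nat.sub_zero]
              exact hc1 j (Finset.mem_insert_of_mem hj)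
            · intro j hj
              rcases eq_or_ne j a with rfl | hja
              · rw [Finsupp.tsub_apply, Finsupp.tsub_apply, hu0l j, hu0r j,
                  if_pos rfl, if_pos rfl]
                omega
              · have hj' : j ∉ insert a s := by
                  rw [Finset.mem_insert, not_or]; exact ⟨hja, hj⟩
                have := hc2 j hj'
                rw [Finsupp.tsub_apply, Finsupp.tsub_apply]
                omega
          rw [ih, if_pos hcond]
          apply Finset.prod_congr rfl
          intro j hj
          have hja : j ≠ a := fun h => ha (h ▸ hj)
          rw [Finsupp.tsub_apply, hu0l j, if_neg hja, Nat.sub_zero]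
        rw [c1, c2, Finset.prod_insert ha]
      · intro p hp hpne
        by_contra hnz
        obtain ⟨hu, hv, -⟩ := main p.1 p.2 (Finset.HasAntidiagonal.mem_antidiagonal.mp hp) hnz
        exact hpne (Prod.ext hu hv)
    · rw [if_neg hc]
      apply Finset.sum_eq_zero
      intro p hp
      by_contra hnz
      obtain ⟨-, -, hda, hs', hout'⟩ := main p.1 p.2 (Finset.HasAntidiagonal.mem_antidiagonal.mp hp) hnz
      apply hc
      refine ⟨?_, hout'⟩
      intro j hj
      rcases Finset.mem_insert.mp hj with rfl | hj'
      · exact hda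
      · exact hs' j hj'
lemma coeff_xToZ_diag {n : ℕ} (V : MvPolynomial (Fin n) ℝ) (k : Fin n → ℕ) :
    coeff (diagExp k) (xToZ V)
      = ((coeff (expOf fun j => 2 * k j) V : ℝ) : ℂ) * (2 : ℂ)⁻¹ ^ (∑ j, 2 * k j)
          * ∏ j, (Nat.choose (2 * k j) (k j) : ℂ) := by
  set D : Fin n →₀ ℕ := expOf fun j => 2 * k j with hD
  have hDj : ∀ j, D j = 2 * k j := fun j => rfl
  have hterm : ∀ d : Fin n →₀ ℕ,
      coeff (diagExp k) (xToZ (monomial d (coeff d V)))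
        = if d = D then ((coeff D V : ℝ) : ℂ) * (2 : ℂ)⁻¹ ^ (∑ j, 2 * k j)
            * ∏ j, (Nat.choose (2 * k j) (k j) : ℂ) else 0 := by
    intro d
    rw [show (xToZ (monomial d (coeff d V)) : MvPolynomial (Fin n ⊕ Fin n) ℂ)
        = aeval (fun j => C ((1 : ℂ) / 2) * (X (Sum.inl j) + X (Sum.inr j)))
            (monomial d (coeff d V)) from rfl,
      aeval_monomial]
    rw [show algebraMap ℝ (MvPolynomial (Fin n ⊕ Fin n) ℂ) (coeff d V)
        = C (((coeff d V : ℝ) : ℂ)) from by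
      rw [IsScalarTower.algebraMap_eq ℝ ℂ (MvPolynomial (Fin n ⊕ Fin n) ℂ),
        RingHom.comp_apply, algebraMap_eq, Complex.coe_algebraMap]]
    rw [Finsupp.prod_pow]
    have hsplit : (∏ j, (C ((1:ℂ)/2) * (X (Sum.inl j) + X (Sum.inr j))) ^ d j)
        = C (((1:ℂ)/2) ^ (∑ j, d j)) *
            ∏ j, ((X (Sum.inl j) + X (Sum.inr j)) : MvPolynomial (Fin n ⊕ Fin n) ℂ) ^ d j := by
      simp only [mul_pow, Finset.prod_mul_distrib, ← C_pow, ← map_prod,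
        Finset.prod_pow_eq_pow_sum]
    rw [hsplit, ← mul_assoc, ← C_mul, coeff_C_mul, coeff_prod_binom_aux]
    have hc : ((∀ j ∈ Finset.univ, diagExp k (Sum.inl j) + diagExp k (Sum.inr j) = d j)
          ∧ (∀ j : Fin n, j ∉ Finset.univ →
              diagExp k (Sum.inl j) = 0 ∧ diagExp k (Sum.inr j) = 0)) ↔ d = D := by
      constructor
      · rintro ⟨h1, -⟩
        ext j
        rw [hDj j]
        have h2 : k j + k j = d j := h1 j (Finset.mem_univ j)
        omega
      · rintro rfl
        exact ⟨fun j _ => (two_mul (k j)).symm, fun j hj => absurd (Finset.mem_univ j) hj⟩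
    by_cases hd : d = D
    · rw [if_pos (hc.mpr hd), if_pos hd, hd]
      have : ∀ j, diagExp k (Sum.inl j) = k j := fun j => rfl
      simp only [this, hDj]
      rw [one_div, mul_comm ((coeff D V : ℝ) : ℂ)]
    · rw [if_neg (fun h => hd (hc.mp h)), if_neg hd, mul_zero]
  conv_lhs => rw [V.as_sum, map_sum, coeff_sum]
  simp only [hterm]
  rw [Finset.sum_ite_eq' V.support D]
  by_cases hmem : D ∈ V.support
  · rw [if_pos hmem]
  · rw [if_neg hmem]
    rw [notMem_support_iff] at hmem
    rw [hmem]
    simp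

lemma H_formula {n : ℕ} (u : Fin n → ℝ) (V : MvPolynomial (Fin n) ℝ)
    (G H : MvPolynomial (Fin n ⊕ Fin n) ℂ)
    (heq : LV u G = xToZ V - H) (k : Fin n → ℕ) (hk : (∑ j, k j) = 2) :
    coeff (diagExp k) H
      = ((coeff (expOf fun j => 2 * k j) V : ℝ) : ℂ) * ((4 : ℂ) ^ 2)⁻¹ *
          ∏ j, (Nat.choose (2 * k j) (k j) : ℂ) := by
  have hLV := coeff_LV_diag u G (diagExp k) (fun j => rfl)
  have h0 := congrArg (coeff (diagExp k)) heq
  rw [hLV, coeff_sub] at h0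
  have hH : coeff (diagExp k) H = coeff (diagExp k) (xToZ V) :=
    (sub_eq_zero.mp h0.symm).symm
  rw [hH, coeff_xToZ_diag]
  have h4 : ∑ j, 2 * k j = 4 := by rw [← Finset.mul_sum, hk]; norm_num
  rw [h4]
  norm_num

lemma support_form {n : ℕ} (V : MvPolynomial (Fin n) ℝ) (hV : V.IsHomogeneous 4)
    (heven : ∀ d ∈ V.support, ∀ j, Even (d j)) (d : Fin n →₀ ℕ) (hd : d ∈ V.support) :
    ∃ k : Fin n → ℕ, (∑ j, k j) = 2 ∧ d = expOf fun j => 2 * k j := by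
  have hdeg : d.degree = 4 := by
    by_contra h
    exact (mem_support_iff.mp hd) (hV.coeff_eq_zero h)
  have hsum : ∑ j, d j = 4 := by
    rw [← hdeg, Finsupp.degree]
    exact (Finset.sum_subset (Finset.subset_univ _)
      (fun x _ hx => Finsupp.notMem_support_iff.mp hx)).symm
  refine ⟨fun j => d j / 2, ?_, ?_⟩
  · have h2 : ∀ j, 2 * (d j / 2) = d j := fun j =>
      Nat.mul_div_cancel' ((heven d hd j).two_dvd)
    have : ∑ j, 2 * (d j / 2) = 4 := by
      rw [Finset.sum_congr rfl fun j _ => h2 j, hsum]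
    rw [← Finset.mul_sum] at this
    show (∑ j, d j / 2) = 2
    omega
  · ext j
    exact (Nat.mul_div_cancel' ((heven d hd j).two_dvd)).symm

theorem stmt17 {n : ℕ} (u : Fin n → ℝ) (hpos : ∀ j, 0 < u j) (hind : LinIndepQ u)
    (V2 V2' : MvPolynomial (Fin n) ℝ)
    (hV2 : V2.IsHomogeneous 4) (hV2' : V2'.IsHomogeneous 4)
    (heven : ∀ d ∈ V2.support, ∀ j, Even (d j))
    (heven' : ∀ d ∈ V2'.support, ∀ j, Even (d j))
    (G2 H2 G2' H2' : MvPolynomial (Fin n ⊕ Fin n) ℂ)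
    (hG2 : IsOffDiagPoly 2 G2) (hH2 : IsDiagPoly 2 H2)
    (heq : LV u G2 = xToZ V2 - H2)
    (hG2' : IsOffDiagPoly 2 G2') (hH2' : IsDiagPoly 2 H2')
    (heq' : LV u G2' = xToZ V2' - H2') :
    (∀ k : Fin n → ℕ, (∑ j, k j) = 2 →
      coeff (diagExp k) H2
        = ((coeff (expOf fun j => 2 * k j) V2 : ℝ) : ℂ) * ((4 : ℂ) ^ 2)⁻¹ *
            ∏ j, (Nat.choose (2 * k j) (k j) : ℂ)) ∧
    (H2 = H2' → V2 = V2') := by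
  constructor
  · exact fun k hk => H_formula u V2 G2 H2 heq k hk
  · intro hHH'
    ext d
    by_cases h : ∃ k : Fin n → ℕ, (∑ j, k j) = 2 ∧ d = expOf fun j => 2 * k j
    · obtain ⟨k, hk, rfl⟩ := h
      have e1 := H_formula u V2 G2 H2 heq k hk
      have e2 := H_formula u V2' G2' H2' heq' k hk
      rw [hHH'] at e1
      have h3 := e1.symm.trans e2
      rw [mul_assoc, mul_assoc] at h3
      have hc1 : ((4 : ℂ) ^ 2)⁻¹ ≠ 0 := by norm_num
      have hc2 : (∏ j, (Nat.choose (2 * k j) (k j) : ℂ)) ≠ 0 := by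
        rw [Finset.prod_ne_zero_iff]
        intro j _
        exact Nat.cast_ne_zero.mpr (Nat.choose_pos (by omega)).ne'
      have := mul_right_cancel₀ (mul_ne_zero hc1 hc2) h3
      exact_mod_cast this
    · have h1 : coeff d V2 = 0 := by
        by_contra hne
        exact h (support_form V2 hV2 heven d (mem_support_iff.mpr hne))
      have h2 : coeff d V2' = 0 := by
        by_contra hne
        exact h (support_form V2' hV2' heven' d (mem_support_iff.mpr hne))
      rw [h1, h2]
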